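/- In the LPT schedule of a long BJSP instance (all p_j ≥ m) with g = 1, every maximal slack period has length at most m − 1. Formally: if during a maximal interval [s,t] of slots each slot has fewer than m alive jobs and exactly one job begins per slot, and every job has processing time at least m, then t − s + 1 ≤ m − 1. -/

import Mathlib

/-- In a long instance (`p j ≥ m` for all jobs) with `g = 1`, any slack interval `[a,b]`
(each slot has fewer than `m` alive jobs and exactly one job start) has length at most
`m − 1`, i.e. `b − a + 1 ≤ m − 1`. -/
theorem stmt_6 (m n : ℕ) (p s : Fin n → ℕ) (hp : ∀ j, m ≤ p j)
    (a b : ℕ) (ha : 1 ≤ a) (hab : a ≤ b)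
    (hslack : ∀ u ∈ Finset.Icc a b,
      (Finset.univ.filter (fun j => s j ≤ u ∧ u < s j + p j)).card < m)
    (hstart : ∀ u ∈ Finset.Icc a b,
      (Finset.univ.filter (fun j => s j = u)).card = 1) :
    b + 2 ≤ a + m := by
  by_contra h
  push_neg at h
  have hm : 1 ≤ m := by
    have := hslack a (by simp [Finset.mem_Icc, hab])
    omega
  -- n is nonempty since a job starts at a
  have hne : Nonempty (Fin n) := by
    obtain ⟨j, -⟩ := Finset.card_eq_one.mp (hstart a (by simp [Finset.mem_Icc, hab]))
    exact ⟨j⟩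
  -- choose a job starting at each slot a+i for i < m
  have hchoice : ∀ i : ℕ, ∃ j : Fin n, i < m → s j = a + i := by
    intro i
    by_cases hi : i < m
    · have h1 := hstart (a + i) (by simp [Finset.mem_Icc]; omega)
      obtain ⟨j, hj⟩ := Finset.card_eq_one.mp h1
      refine ⟨j, fun _ => ?_⟩
      have : j ∈ Finset.univ.filter (fun j => s j = a + i) :=
        hj ▸ Finset.mem_singleton_self j
      simpa using this
    · exact ⟨Classical.arbitrary _, fun h => absurd h hi⟩
  choose f hf using hchoice
  set u := a + m - 1 with hu
  have key : (Finset.range m).card ≤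
      (Finset.univ.filter (fun j => s j ≤ u ∧ u < s j + p j)).card := by
    apply Finset.card_le_card_of_injOn f
    · intro i hi
      simp only [Finset.mem_coe, Finset.mem_range] at hi ⊢
      have hfi := hf i hi
      have hpfi := hp (f i)
      simp only [Finset.mem_filter, Finset.mem_univ, true_and]
      omega
    · intro i hi i' hi' hii
      simp only [Finset.coe_range, Set.mem_Iio] at hi hi'
      have h1 := hf i hi
      have h2 := hf i' hi'
      rw [hii] at h1
      omega
  have := hslack u (by simp [Finset.mem_Icc]; omega)
  simp [Finset.card_range] at key
  omega
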